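/- For a fixed job sequence S, the minimum number of tool switches over all full magazine state sequences equals Σ_{i=1}^n |T_i| − C − max over all full magazine state sequences M of the number of pipes of M. That is, min_{M ∈ M(S)} switches(M) = Σ_{i=1}^n |T_i| − C − max_{M ∈ M(S)} |T(M)|. -/

import Mathlib

/-- Total number of tool switches of a magazine state sequence. -/
def switches (n C : ℕ) (M : ℕ → Finset ℕ) : ℕ :=
  ∑ i ∈ Finset.Icc 1 (n - 1), (C - ((M i) ∩ (M (i + 1))).card)

/-- A pipe `π_{s,e}^t` of the magazine state sequence `M`. -/
def IsPipe (n : ℕ) (T M : ℕ → Finset ℕ) (s e t : ℕ) : Prop :=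
  1 ≤ s ∧ s < e ∧ e ≤ n ∧ t ∈ T s ∧ t ∈ T e ∧
    ∀ i, s < i → i < e → t ∉ T i ∧ t ∈ M i

/-- `T(M)`: the set of pipes of `M`, as triples `(s, e, t)`. -/
def pipeSet (n : ℕ) (T M : ℕ → Finset ℕ) : Set (ℕ × ℕ × ℕ) :=
  {p | IsPipe n T M p.1 p.2.1 p.2.2}

/-- `M(S)`: full magazine state sequences feasible for the job order
`1, …, n`: `T i ⊆ M i` and `|M i| = C` at every instant. -/
def MS (n C : ℕ) (T : ℕ → Finset ℕ) : Set (ℕ → Finset ℕ) :=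
  {M | ∀ i ∈ Finset.Icc 1 n, T i ⊆ M i ∧ (M i).card = C}

namespace Thm1

open Finset

open Classical in
/-- The pipes of `M` as a `Finset` of triples. -/
noncomputable def pipeFin (n m : ℕ) (T M : ℕ → Finset ℕ) : Finset (ℕ × ℕ × ℕ) :=
  ((Finset.Icc 1 n) ×ˢ (Finset.Icc 1 n) ×ˢ (Finset.Icc 1 m)).filter
    (fun p => IsPipe n T M p.1 p.2.1 p.2.2)

lemma mem_pipeFin {n m : ℕ} {T M : ℕ → Finset ℕ}
    (hTsub : ∀ i ∈ Finset.Icc 1 n, T i ⊆ Finset.Icc 1 m) {p : ℕ × ℕ × ℕ} :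
    p ∈ pipeFin n m T M ↔ IsPipe n T M p.1 p.2.1 p.2.2 := by
  classical
  simp only [pipeFin, Finset.mem_filter, Finset.mem_product, and_iff_right_iff_imp]
  intro hp
  obtain ⟨h1, h2, h3, h4, _⟩ := hp
  have hs : p.1 ∈ Finset.Icc 1 n := by simp [Finset.mem_Icc]; omega
  exact ⟨hs, by simp [Finset.mem_Icc]; omega, hTsub p.1 hs h4⟩

lemma coe_pipeFin {n m : ℕ} {T M : ℕ → Finset ℕ}
    (hTsub : ∀ i ∈ Finset.Icc 1 n, T i ⊆ Finset.Icc 1 m) :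
    pipeSet n T M = ↑(pipeFin n m T M) := by
  ext p
  simp [pipeSet, mem_pipeFin hTsub]

/-- Occurrences, as a sigma finset. -/
def occSig (n : ℕ) (T : ℕ → Finset ℕ) : Finset ((_ : ℕ) × ℕ) :=
  (Finset.Icc 1 n).sigma T

lemma occSig_card (n : ℕ) (T : ℕ → Finset ℕ) :
    (occSig n T).card = ∑ i ∈ Finset.Icc 1 n, (T i).card :=
  Finset.card_sigma _ _

open Classical in
/-- Run starts: at time `1` every tool of `M 1`, later the inserted tools. -/
noncomputable def startSig (n : ℕ) (M : ℕ → Finset ℕ) : Finset ((_ : ℕ) × ℕ) :=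
  (Finset.Icc 1 n).sigma (fun j => if j = 1 then M 1 else M j \ M (j - 1))

lemma startSig_card {n C : ℕ} {T : ℕ → Finset ℕ} (M : ℕ → Finset ℕ)
    (hn : 1 ≤ n) (hM : M ∈ MS n C T) :
    (startSig n M).card = C + switches n C M := by
  classical
  have hins : Finset.Icc 1 n = insert 1 (Finset.Icc 2 n) := by
    ext x; simp [Finset.mem_Icc]; omega
  rw [startSig, Finset.card_sigma, hins,
    Finset.sum_insert (by simp [Finset.mem_Icc])]
  congr 1
  · simp [(hM 1 (by simp [Finset.mem_Icc]; omega)).2]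
  · rw [switches]
    refine Finset.sum_nbij' (fun j => j - 1) (fun i => i + 1) ?_ ?_ ?_ ?_ ?_
    · intro a ha; simp only [Finset.mem_Icc] at ha ⊢; omega
    · intro a ha; simp only [Finset.mem_Icc] at ha ⊢; omega
    · intro a ha; simp only [Finset.mem_Icc] at ha; omega
    · intro a ha; simp only [Finset.mem_Icc] at ha; omega
    · intro a ha
      simp only [Finset.mem_Icc] at ha
      have h1 : ¬ (a = 1) := by omega
      have h2 : a - 1 + 1 = a := by omega
      rw [if_neg h1, h2]
      have hsub : M a ∩ M (a - 1) ⊆ M a := Finset.inter_subset_left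
      rw [← Finset.sdiff_inter_self_left, Finset.card_sdiff_of_subset hsub,
        (hM a (by simp [Finset.mem_Icc]; omega)).2, Finset.inter_comm]


open Finset

/-- The start of the `M`-run of tool `t` that contains time `i`. -/
def runStart (M : ℕ → Finset ℕ) (t i : ℕ) : ℕ :=
  max 1 (Nat.findGreatest (fun j => 2 ≤ j ∧ t ∉ M (j - 1)) i)

lemma runStart_pos (M : ℕ → Finset ℕ) (t i : ℕ) : 1 ≤ runStart M t i :=
  le_max_left _ _

lemma runStart_le (M : ℕ → Finset ℕ) (t i : ℕ) (hi : 1 ≤ i) : runStart M t i ≤ i :=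
  max_le hi (Nat.findGreatest_le i)

lemma runStart_run (M : ℕ → Finset ℕ) (t i : ℕ) (hti : t ∈ M i) :
    ∀ l, runStart M t i ≤ l → l ≤ i → t ∈ M l := by
  intro l hl1 hl2
  by_contra hcon
  have hpos := runStart_pos M t i
  have hlt : l < i := by
    rcases Nat.lt_or_ge l i with h | h
    · exact h
    · exact absurd hti (by have : l = i := le_antisymm hl2 h; rwa [this] at hcon)
  have hP : 2 ≤ l + 1 ∧ t ∉ M (l + 1 - 1) := ⟨by omega, by simpa using hcon⟩
  have h2 := Nat.le_findGreatest (P := fun j => 2 ≤ j ∧ t ∉ M (j - 1)) (by omega : l + 1 ≤ i) hP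
  have h3 : l + 1 ≤ runStart M t i := le_trans h2 (le_max_right _ _)
  omega

lemma runStart_start (M : ℕ → Finset ℕ) (t i : ℕ) :
    runStart M t i = 1 ∨ (2 ≤ runStart M t i ∧ t ∉ M (runStart M t i - 1)) := by
  rcases Nat.eq_zero_or_pos (Nat.findGreatest (fun j => 2 ≤ j ∧ t ∉ M (j - 1)) i)
    with h | h
  · left; rw [runStart, h]; simp
  · right
    have hne : Nat.findGreatest (fun j => 2 ≤ j ∧ t ∉ M (j - 1)) i ≠ 0 := by omega
    rw [Ne, Nat.findGreatest_eq_zero_iff] at hne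
    push_neg at hne
    obtain ⟨w, hw0, hwi, hwP⟩ := hne
    have hspec := Nat.findGreatest_spec (P := fun j => 2 ≤ j ∧ t ∉ M (j - 1)) hwi hwP
    have heq : runStart M t i = Nat.findGreatest (fun j => 2 ≤ j ∧ t ∉ M (j - 1)) i :=
      max_eq_right (by omega)
    rw [heq]; exact hspec

lemma lower_bound {n C m : ℕ} {T : ℕ → Finset ℕ} (M : ℕ → Finset ℕ)
    (hM : M ∈ MS n C T)
    (hTsub : ∀ i ∈ Finset.Icc 1 n, T i ⊆ Finset.Icc 1 m) :
    (occSig n T).card ≤ (pipeFin n m T M).card + (startSig n M).card := by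
  classical
  set D : ℕ → ℕ → Finset ℕ :=
    fun i t => (Finset.Ico (runStart M t i) i).filter (fun s => t ∈ T s) with hD
  set f : (Σ _ : ℕ, ℕ) → ℕ × ℕ × ℕ := fun x =>
    if h : (D x.1 x.2).Nonempty then ((D x.1 x.2).max' h, x.1, x.2)
    else (0, runStart M x.2 x.1, x.2) with hf
  have key : (occSig n T).card ≤
      (pipeFin n m T M ∪ (startSig n M).image (fun y => (0, y.1, y.2))).card := by
    apply Finset.card_le_card_of_injOn f
    · rintro ⟨i, t⟩ hx
      simp only [occSig, Finset.mem_coe, Finset.mem_sigma, Finset.mem_Icc] at hx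
      obtain ⟨⟨hi1, hin⟩, hti⟩ := hx
      have htM : t ∈ M i := (hM i (by simp [Finset.mem_Icc]; omega)).1 hti
      by_cases h : (D i t).Nonempty
      · -- previous occurrence exists in the run: a pipe
        simp only [hf, dif_pos h]
        set s := (D i t).max' h with hs
        have hsD : s ∈ D i t := Finset.max'_mem _ h
        simp only [hD, Finset.mem_filter, Finset.mem_Ico] at hsD
        obtain ⟨⟨hsr, hsi⟩, hts⟩ := hsD
        have hs1 : 1 ≤ s := le_trans (runStart_pos M t i) hsr
        apply Finset.mem_union_left
        rw [mem_pipeFin hTsub]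
        show IsPipe n T M s i t
        refine ⟨hs1, hsi, by omega, hts, hti, ?_⟩
        intro l hl1 hl2
        constructor
        · intro hcon
          have hlD : l ∈ D i t := by
            simp only [hD, Finset.mem_filter, Finset.mem_Ico]
            exact ⟨⟨by omega, hl2⟩, hcon⟩
          have := Finset.le_max' _ l hlD
          omega
        · exact runStart_run M t i htM l (by omega) (by omega)
      · -- no previous occurrence: run start
        simp only [hf, dif_neg h]
        apply Finset.mem_union_right
        refine Finset.mem_image.mpr ⟨⟨runStart M t i, t⟩, ?_, rfl⟩
        simp only [startSig, Finset.mem_sigma, Finset.mem_Icc]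
        have hr1 := runStart_pos M t i
        have hrle := runStart_le M t i (by omega)
        refine ⟨⟨hr1, by omega⟩, ?_⟩
        rcases runStart_start M t i with hcase | ⟨hge2, hnot⟩
        · rw [hcase, if_pos rfl]
          exact runStart_run M t i htM 1 (by omega) (by omega)
        · rw [if_neg (by omega)]
          refine Finset.mem_sdiff.mpr ⟨?_, hnot⟩
          exact runStart_run M t i htM _ le_rfl hrle
    · -- injectivity
      rintro ⟨i, t⟩ hx ⟨i', t'⟩ hy hxy
      simp only [occSig, Finset.coe_sigma, Set.mem_sigma_iff, Finset.mem_coe,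
        Finset.mem_Icc] at hx hy
      obtain ⟨⟨hi1, hin⟩, hti⟩ := hx
      obtain ⟨⟨hi'1, hi'n⟩, hti'⟩ := hy
      simp only [hf] at hxy
      by_cases h1 : (D i t).Nonempty <;> by_cases h2 : (D i' t').Nonempty
      · rw [dif_pos h1, dif_pos h2] at hxy
        have ht : t = t' := congrArg (fun p => p.2.2) hxy
        have hi : i = i' := congrArg (fun p => p.2.1) hxy
        subst ht; subst hi; rfl
      · rw [dif_pos h1, dif_neg h2] at hxy
        have h0 : (D i t).max' h1 = 0 := congrArg Prod.fst hxy
        have hsD := Finset.max'_mem _ h1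
        rw [h0] at hsD
        simp only [hD, Finset.mem_filter, Finset.mem_Ico] at hsD
        have hpos := runStart_pos M t i
        omega
      · rw [dif_neg h1, dif_pos h2] at hxy
        have h0 : 0 = (D i' t').max' h2 := congrArg Prod.fst hxy
        have hsD := Finset.max'_mem _ h2
        rw [← h0] at hsD
        simp only [hD, Finset.mem_filter, Finset.mem_Ico] at hsD
        have hpos := runStart_pos M t' i'
        omega
      · rw [dif_neg h1, dif_neg h2] at hxy
        have htt : t = t' := congrArg (fun p => p.2.2) hxy
        subst htt
        have hRR : runStart M t i = runStart M t i' :=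
          congrArg (fun p => p.2.1) hxy
        have hii : i = i' := by
          by_contra hne
          rcases Nat.lt_or_ge i i' with hlt | hge
          · have htM' : t ∈ M i' := (hM i' (by simp [Finset.mem_Icc]; omega)).1 hti'
            have : i ∈ D i' t := by
              simp only [hD, Finset.mem_filter, Finset.mem_Ico]
              refine ⟨⟨?_, hlt⟩, hti⟩
              rw [← hRR]; exact runStart_le M t i (by omega)
            exact h2 ⟨i, this⟩
          · have hlt : i' < i := by omega
            have htM : t ∈ M i := (hM i (by simp [Finset.mem_Icc]; omega)).1 hti
            have : i' ∈ D i t := by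
              simp only [hD, Finset.mem_filter, Finset.mem_Ico]
              refine ⟨⟨?_, hlt⟩, hti'⟩
              rw [hRR]; exact runStart_le M t i' (by omega)
            exact h1 ⟨i', this⟩
        subst hii; rfl
  calc (occSig n T).card ≤ _ := key
    _ ≤ (pipeFin n m T M).card + ((startSig n M).image (fun y => (0, y.1, y.2))).card :=
        Finset.card_union_le _ _
    _ ≤ (pipeFin n m T M).card + (startSig n M).card := by
        gcongr; exact Finset.card_image_le


open Finset

/-- Times at which tool `t` is required. -/
def occT (n : ℕ) (T : ℕ → Finset ℕ) (t : ℕ) : Finset ℕ :=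
  (Finset.Icc 1 n).filter (fun i => t ∈ T i)

/-- The first time tool `t` is required. -/
noncomputable def firstOcc (n : ℕ) (T : ℕ → Finset ℕ) (t : ℕ) : ℕ :=
  if h : (occT n T t).Nonempty then (occT n T t).min' h else 0

lemma firstOcc_mem {n : ℕ} {T : ℕ → Finset ℕ} {t : ℕ} (h : (occT n T t).Nonempty) :
    firstOcc n T t ∈ Finset.Icc 1 n ∧ t ∈ T (firstOcc n T t) := by
  rw [firstOcc, dif_pos h]
  have := Finset.min'_mem _ h
  simp only [occT, Finset.mem_filter] at this
  exact this

lemma firstOcc_min {n : ℕ} {T : ℕ → Finset ℕ} {t s : ℕ}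
    (hs : s ∈ Finset.Icc 1 n) (hts : t ∈ T s) : firstOcc n T t ≤ s := by
  have hmem : s ∈ occT n T t := by simp only [occT, Finset.mem_filter]; exact ⟨hs, hts⟩
  rw [firstOcc, dif_pos ⟨s, hmem⟩]
  exact Finset.min'_le _ _ hmem

open Classical in
/-- Forced tools at instant `i`: required tools plus interiors of pipes of `M`. -/
noncomputable def Ffin (n m : ℕ) (T M : ℕ → Finset ℕ) (i : ℕ) : Finset ℕ :=
  T i ∪ (Finset.Icc 1 m).filter (fun t => ∃ s e, IsPipe n T M s e t ∧ s < i ∧ i < e)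

lemma Ffin_one {n m : ℕ} {T M : ℕ → Finset ℕ} : Ffin n m T M 1 = T 1 := by
  classical
  rw [Ffin]
  convert Finset.union_empty _ using 2
  rw [Finset.filter_eq_empty_iff]
  rintro t - ⟨s, e, hp, hs1, h1e⟩
  exact absurd hp.1 (by omega)

lemma Ffin_subset {n m C : ℕ} {T M : ℕ → Finset ℕ} (hM : M ∈ MS n C T)
    {i : ℕ} (hi : i ∈ Finset.Icc 1 n) : Ffin n m T M i ⊆ M i := by
  classical
  intro t ht
  rw [Ffin, Finset.mem_union] at ht
  rcases ht with ht | ht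
  · exact (hM i hi).1 ht
  · rw [Finset.mem_filter] at ht
    obtain ⟨-, s, e, hp, hs, he⟩ := ht
    exact (hp.2.2.2.2.2 i hs he).2

lemma Ffin_subset_Icc {n m : ℕ} {T M : ℕ → Finset ℕ}
    (hTsub : ∀ i ∈ Finset.Icc 1 n, T i ⊆ Finset.Icc 1 m)
    {i : ℕ} (hi : i ∈ Finset.Icc 1 n) : Ffin n m T M i ⊆ Finset.Icc 1 m := by
  classical
  intro t ht
  rw [Ffin, Finset.mem_union] at ht
  rcases ht with ht | ht
  · exact hTsub i hi ht
  · exact (Finset.mem_filter.mp ht).1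

lemma Ffin_firstOcc {n m : ℕ} {T M : ℕ → Finset ℕ}
    {i : ℕ} (hi : i ∈ Finset.Icc 1 n) {t : ℕ} (ht : t ∈ Ffin n m T M i) :
    firstOcc n T t ≤ i := by
  classical
  rw [Ffin, Finset.mem_union] at ht
  rcases ht with ht | ht
  · exact firstOcc_min hi ht
  · rw [Finset.mem_filter] at ht
    obtain ⟨-, s, e, hp, hs, he⟩ := ht
    have hsIcc : s ∈ Finset.Icc 1 n := by
      rw [Finset.mem_Icc]
      exact ⟨hp.1, by have := hp.2.1; have := hp.2.2.1; omega⟩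
    exact le_trans (firstOcc_min hsIcc hp.2.2.2.1) (le_of_lt hs)

/-- Choosing a `k`-subset minimizing `f`. -/
lemma exists_min_subset (f : ℕ → ℕ) :
    ∀ (k : ℕ) (s : Finset ℕ), k ≤ s.card →
      ∃ P ⊆ s, P.card = k ∧ ∀ t ∈ P, ∀ u ∈ s \ P, f t ≤ f u := by
  intro k
  induction k with
  | zero => intro s _; exact ⟨∅, Finset.empty_subset s, rfl, by simp⟩
  | succ k ih =>
    intro s hk
    have hne : s.Nonempty := Finset.card_pos.mp (by omega)
    obtain ⟨t0, ht0s, ht0min⟩ := Finset.exists_min_image s f hne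
    obtain ⟨P', hP'sub, hP'card, hP'min⟩ := ih (s.erase t0)
      (by rw [Finset.card_erase_of_mem ht0s]; omega)
    have ht0P' : t0 ∉ P' := fun h => (Finset.mem_erase.mp (hP'sub h)).1 rfl
    refine ⟨insert t0 P', ?_, ?_, ?_⟩
    · intro x hx
      rcases Finset.mem_insert.mp hx with rfl | hx
      · exact ht0s
      · exact (Finset.erase_subset _ _) (hP'sub hx)
    · rw [Finset.card_insert_of_notMem ht0P', hP'card]
    · intro t ht u hu
      rw [Finset.mem_sdiff] at hu
      rcases Finset.mem_insert.mp ht with rfl | ht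
      · exact ht0min u hu.1
      · apply hP'min t ht u
        rw [Finset.mem_sdiff, Finset.mem_erase]
        refine ⟨⟨?_, hu.1⟩, fun h => hu.2 (Finset.mem_insert_of_mem h)⟩
        rintro rfl
        exact hu.2 (Finset.mem_insert_self _ _)

open Classical in
/-- One step of the greedy persistent construction. -/
noncomputable def step (C : ℕ) (cur prev : Finset ℕ) : Finset ℕ :=
  cur ∪ (if h : C - cur.card ≤ (prev \ cur).card
    then (Finset.exists_subset_card_eq h).choose else ∅)

lemma subset_step (C : ℕ) (cur prev : Finset ℕ) : cur ⊆ step C cur prev :=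
  Finset.subset_union_left

lemma step_sdiff (C : ℕ) (cur prev : Finset ℕ) : step C cur prev \ cur ⊆ prev := by
  classical
  intro x hx
  rw [Finset.mem_sdiff] at hx
  obtain ⟨hx1, hx2⟩ := hx
  rw [step, Finset.mem_union] at hx1
  rcases hx1 with h | h
  · exact absurd h hx2
  · by_cases hc : C - cur.card ≤ (prev \ cur).card
    · rw [dif_pos hc] at h
      have := (Finset.exists_subset_card_eq hc).choose_spec.1 h
      exact (Finset.mem_sdiff.mp this).1
    · rw [dif_neg hc] at h; exact absurd h (Finset.notMem_empty x)

lemma step_card {C : ℕ} {cur prev : Finset ℕ} (h1 : cur.card ≤ C)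
    (h2 : C - cur.card ≤ (prev \ cur).card) : (step C cur prev).card = C := by
  classical
  rw [step, dif_pos h2]
  obtain ⟨hsub, hcard⟩ := (Finset.exists_subset_card_eq h2).choose_spec
  rw [Finset.card_union_of_disjoint, hcard]
  · omega
  · refine Finset.disjoint_left.mpr (fun x hx hx2 => ?_)
    exact (Finset.mem_sdiff.mp (hsub hx2)).2 hx


open Finset

lemma pipe_start_unique {n : ℕ} {T M : ℕ → Finset ℕ} :
    ∀ s s' e t, IsPipe n T M s e t → IsPipe n T M s' e t → s = s' := by
  intro s s' e t h h'
  by_contra hne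
  rcases Nat.lt_or_ge s s' with hlt | hge
  · exact (h.2.2.2.2.2 s' hlt h'.2.1).1 h'.2.2.2.1
  · have hlt : s' < s := by omega
    exact (h'.2.2.2.2.2 s hlt h.2.1).1 h.2.2.2.1

lemma exists_good {n C m : ℕ} {T : ℕ → Finset ℕ}
    (hn : 1 ≤ n) (hCm : C < m)
    (hT : ∀ i ∈ Finset.Icc 1 n, (T i).card ≤ C)
    (hTsub : ∀ i ∈ Finset.Icc 1 n, T i ⊆ Finset.Icc 1 m)
    (hcover : (Finset.Icc 1 n).biUnion T = Finset.Icc 1 m)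
    (M0 : ℕ → Finset ℕ) (hM0 : M0 ∈ MS n C T) :
    ∃ M ∈ MS n C T,
      (pipeFin n m T M0).card ≤ (pipeFin n m T M).card ∧
      (pipeFin n m T M).card + (startSig n M).card ≤ (occSig n T).card := by
  classical
  set F : ℕ → Finset ℕ := Ffin n m T M0 with hF
  have hocc : ∀ t ∈ Finset.Icc 1 m, (occT n T t).Nonempty := by
    intro t ht
    rw [← hcover, Finset.mem_biUnion] at ht
    obtain ⟨i, hi, hti⟩ := ht
    exact ⟨i, by simp only [occT, Finset.mem_filter]; exact ⟨hi, hti⟩⟩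
  have hoccP : ∀ t ∈ Finset.Icc 1 m,
      firstOcc n T t ∈ Finset.Icc 1 n ∧ t ∈ T (firstOcc n T t) :=
    fun t ht => firstOcc_mem (hocc t ht)
  have h1n : (1 : ℕ) ∈ Finset.Icc 1 n := by simp [Finset.mem_Icc]; omega
  have hF1 : F 1 = T 1 := Ffin_one
  have hF1card : (F 1).card ≤ C := by rw [hF1]; exact hT 1 h1n
  have hF1sub : F 1 ⊆ Finset.Icc 1 m := by rw [hF1]; exact hTsub 1 h1n
  have hcardIm : (Finset.Icc 1 m \ F 1).card = m - (F 1).card := by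
    rw [Finset.card_sdiff_of_subset hF1sub, Nat.card_Icc]
    omega
  obtain ⟨P, hPsub, hPcard, hPmin⟩ := exists_min_subset (firstOcc n T)
    (C - (F 1).card) (Finset.Icc 1 m \ F 1) (by rw [hcardIm]; omega)
  set G : ℕ → Finset ℕ := fun i => F i ∪ P.filter (fun t => i ≤ firstOcc n T t)
    with hG
  have hPm : P ⊆ Finset.Icc 1 m := hPsub.trans Finset.sdiff_subset
  have hPF1 : ∀ t ∈ P, t ∉ F 1 := fun t ht => (Finset.mem_sdiff.mp (hPsub ht)).2
  have hFP_card : (F 1 ∪ P).card = C := by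
    rw [Finset.card_union_of_disjoint
      (Finset.disjoint_left.mpr (fun a ha hb => hPF1 a hb ha)), hPcard]
    omega
  have hG1 : G 1 = F 1 ∪ P := by
    show F 1 ∪ P.filter (fun t => 1 ≤ firstOcc n T t) = F 1 ∪ P
    congr 1
    refine Finset.filter_true_of_mem (fun t ht => ?_)
    have := (hoccP t (hPm ht)).1
    rw [Finset.mem_Icc] at this
    omega
  have hG1card : (G 1).card = C := by rw [hG1, hFP_card]
  -- key capacity bound
  have hGcard : ∀ i ∈ Finset.Icc 1 n, (G i).card ≤ C := by
    intro i hi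
    by_cases hpend : ∃ t ∈ P, i ≤ firstOcc n T t ∧ t ∉ F i
    · obtain ⟨t, htP, hto, htF⟩ := hpend
      have hkey : G i ⊆ F 1 ∪ P := by
        intro x hx
        rcases Finset.mem_union.mp hx with hx | hx
        · by_contra hxcon
          rw [Finset.mem_union] at hxcon
          push_neg at hxcon
          have hxm : x ∈ Finset.Icc 1 m := Ffin_subset_Icc hTsub hi hx
          have hxmem : x ∈ (Finset.Icc 1 m \ F 1) \ P := by
            rw [Finset.mem_sdiff, Finset.mem_sdiff]
            exact ⟨⟨hxm, hxcon.1⟩, hxcon.2⟩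
          have hmin := hPmin t htP x hxmem
          have hxo : firstOcc n T x ≤ i := Ffin_firstOcc hi hx
          have heq : firstOcc n T t = i := by omega
          have htTi := (hoccP t (hPm htP)).2
          rw [heq] at htTi
          exact absurd (Finset.mem_union_left _ htTi) htF
        · exact Finset.mem_union_right _ (Finset.filter_subset _ _ hx)
      calc (G i).card ≤ (F 1 ∪ P).card := Finset.card_le_card hkey
        _ = C := hFP_card
    · push_neg at hpend
      have hsub : G i ⊆ F i := by
        intro x hx
        rcases Finset.mem_union.mp hx with hx | hx
        · exact hx
        · rw [Finset.mem_filter] at hx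
          exact hpend x hx.1 hx.2
      calc (G i).card ≤ (F i).card := Finset.card_le_card hsub
        _ ≤ (M0 i).card := Finset.card_le_card (Ffin_subset hM0 hi)
        _ = C := (hM0 i hi).2
  -- the greedy persistent sequence
  set Mstar : ℕ → Finset ℕ :=
    fun i => Nat.rec ∅ (fun j prev => step C (G (j + 1)) prev) i with hMstar
  have hMs_succ : ∀ j : ℕ, Mstar (j + 1) = step C (G (j + 1)) (Mstar j) :=
    fun j => rfl
  have hMcard : ∀ i, 1 ≤ i → i ≤ n → (Mstar i).card = C := by
    intro i
    induction i with
    | zero => intro h; omega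
    | succ j ih =>
      intro h1 h2
      rw [hMs_succ j]
      rcases Nat.eq_zero_or_pos j with rfl | hj
      · refine step_card (le_of_eq hG1card) ?_
        rw [hG1card]
        simp
      · refine step_card (hGcard (j + 1) (by simp [Finset.mem_Icc]; omega)) ?_
        have hprev : (Mstar j).card = C := ih hj (by omega)
        calc C - (G (j + 1)).card = (Mstar j).card - (G (j + 1)).card := by
              rw [hprev]
          _ ≤ (Mstar j \ G (j + 1)).card := Finset.le_card_sdiff _ _
  have hGsubM : ∀ i, 1 ≤ i → i ≤ n → G i ⊆ Mstar i := by
    intro i h1 h2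
    obtain ⟨j, rfl⟩ : ∃ j, i = j + 1 := ⟨i - 1, by omega⟩
    rw [hMs_succ]
    exact subset_step _ _ _
  have hMS : Mstar ∈ MS n C T := by
    intro i hi
    have hi' := Finset.mem_Icc.mp hi
    refine ⟨fun x hx => ?_, hMcard i hi'.1 hi'.2⟩
    exact hGsubM i hi'.1 hi'.2
      (Finset.mem_union_left _ (Finset.mem_union_left _ hx))
  have hpipe_mono : pipeFin n m T M0 ⊆ pipeFin n m T Mstar := by
    intro p hp
    rw [mem_pipeFin hTsub] at hp ⊢
    obtain ⟨h1, h2, h3, h4, h5, h6⟩ := hp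
    refine ⟨h1, h2, h3, h4, h5, fun i his hie => ⟨(h6 i his hie).1, ?_⟩⟩
    apply hGsubM i (by omega) (by omega)
    apply Finset.mem_union_left
    have hpm : p.2.2 ∈ Finset.Icc 1 m :=
      hTsub p.1 (by rw [Finset.mem_Icc]; omega) h4
    refine Finset.mem_union_right _ ?_
    rw [Finset.mem_filter]
    exact ⟨hpm, p.1, p.2.1, ⟨h1, h2, h3, h4, h5, h6⟩, his, hie⟩
  have hM1 : Mstar 1 = G 1 := by
    refine Finset.Subset.antisymm (fun x hx => ?_) (hGsubM 1 le_rfl hn)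
    by_contra hxG
    have hmem : x ∈ step C (G 1) (∅ : Finset ℕ) \ G 1 :=
      Finset.mem_sdiff.mpr ⟨hx, hxG⟩
    exact absurd (step_sdiff _ _ _ hmem) (Finset.notMem_empty x)
  -- a pad stays in the magazine until its first occurrence
  have hrun1 : ∀ t ∈ P, ∀ l, 1 ≤ l → l ≤ firstOcc n T t → t ∈ Mstar l := by
    intro t htP l hl1 hl2
    have hfo := (hoccP t (hPm htP)).1
    rw [Finset.mem_Icc] at hfo
    apply hGsubM l hl1 (by omega)
    refine Finset.mem_union_right _ ?_
    rw [Finset.mem_filter]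
    exact ⟨htP, hl2⟩
  -- every later insertion is an occurrence
  have hins_occ : ∀ j, 2 ≤ j → j ≤ n → ∀ t, t ∈ Mstar j → t ∉ Mstar (j - 1) →
      t ∈ T j := by
    intro j hj2 hjn t htj htj'
    obtain ⟨j', rfl⟩ : ∃ j', j = j' + 1 := ⟨j - 1, by omega⟩
    have hj'1 : 1 ≤ j' := by omega
    rw [Nat.add_sub_cancel] at htj'
    have htG : t ∈ G (j' + 1) := by
      by_contra hcon
      rw [hMs_succ] at htj
      exact htj' (step_sdiff _ _ _ (Finset.mem_sdiff.mpr ⟨htj, hcon⟩))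
    rcases Finset.mem_union.mp htG with htF | htP2
    · rw [hF] at htF
      rcases Finset.mem_union.mp htF with htT | htpipe
      · exact htT
      · exfalso
        rw [Finset.mem_filter] at htpipe
        obtain ⟨htm, s, e, hp, hs, he⟩ := htpipe
        apply htj'
        apply hGsubM j' hj'1 (by omega)
        apply Finset.mem_union_left
        rcases Nat.lt_or_ge s j' with hs' | hs'
        · rw [hF]
          refine Finset.mem_union_right _ ?_
          rw [Finset.mem_filter]
          exact ⟨htm, s, e, hp, hs', by omega⟩
        · have hseq : s = j' := by omega
          rw [hF]
          refine Finset.mem_union_left _ ?_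
          rw [← hseq]
          exact hp.2.2.2.1
    · exfalso
      rw [Finset.mem_filter] at htP2
      exact htj' (hrun1 t htP2.1 j' hj'1 (by omega))
  -- the last interior instant of a pipe of Mstar
  have hpipe_end : ∀ s e t, IsPipe n T Mstar s e t → t ∈ Mstar (e - 1) := by
    intro s e t hp
    obtain ⟨h1, h2, h3, h4, h5, h6⟩ := hp
    rcases Nat.lt_or_ge s (e - 1) with hs | hs
    · exact (h6 (e - 1) hs (by omega)).2
    · have hse : e - 1 = s := by omega
      rw [hse]
      exact (hMS s (by rw [Finset.mem_Icc]; omega)).1 h4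
  refine ⟨Mstar, hMS, Finset.card_le_card hpipe_mono, ?_⟩
  -- encode the starts as triples with first component 0
  set SC : Finset (ℕ × ℕ × ℕ) :=
    (startSig n Mstar).image (fun y => (0, y.1, y.2)) with hSC
  have hSCcard : SC.card = (startSig n Mstar).card := by
    apply Finset.card_image_of_injOn
    intro y _ y' _ h
    have h1 : y.1 = y'.1 := congrArg (fun p => p.2.1) h
    have h2 : y.2 = y'.2 := congrArg (fun p => p.2.2) h
    exact Sigma.ext h1 (heq_of_eq h2)
  have hSCdec : ∀ p ∈ SC, p.1 = 0 ∧ p.2.1 ∈ Finset.Icc 1 n ∧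
      (p.2.1 = 1 → p.2.2 ∈ Mstar 1) ∧
      (2 ≤ p.2.1 → p.2.2 ∈ Mstar p.2.1 ∧ p.2.2 ∉ Mstar (p.2.1 - 1)) := by
    intro p hp
    obtain ⟨y, hy, hyeq⟩ := Finset.mem_image.mp hp
    simp only [startSig, Finset.mem_sigma] at hy
    obtain ⟨hy1, hy2⟩ := hy
    subst hyeq
    refine ⟨rfl, hy1, ?_, ?_⟩
    · intro h1
      dsimp only at h1 ⊢
      rw [if_pos h1] at hy2
      exact hy2
    · intro h2
      dsimp only at h2 ⊢
      rw [if_neg (by omega)] at hy2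
      exact Finset.mem_sdiff.mp hy2
  have hdisj : Disjoint (pipeFin n m T Mstar) SC := by
    rw [Finset.disjoint_left]
    intro p hp hpSC
    rw [mem_pipeFin hTsub] at hp
    have h0 := (hSCdec p hpSC).1
    have := hp.1
    omega
  have hcardeq : (pipeFin n m T Mstar ∪ SC).card =
      (pipeFin n m T Mstar).card + (startSig n Mstar).card := by
    rw [Finset.card_union_of_disjoint hdisj, hSCcard]
  rw [← hcardeq]
  set g : ℕ × ℕ × ℕ → (Σ _ : ℕ, ℕ) := fun p =>
    if p.1 = 0 then
      (if 2 ≤ p.2.1 then ⟨p.2.1, p.2.2⟩ else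
        (if p.2.2 ∈ T 1 then ⟨1, p.2.2⟩ else ⟨firstOcc n T p.2.2, p.2.2⟩))
    else ⟨p.2.1, p.2.2⟩ with hg
  -- image of a start with j = 1
  have hone : ∀ p, p ∈ SC → ¬ 2 ≤ p.2.1 → p.2.1 = 1 ∧ p.2.2 ∈ Mstar 1 := by
    intro p hp h2
    obtain ⟨-, hIcc, hone', -⟩ := hSCdec p hp
    rw [Finset.mem_Icc] at hIcc
    have : p.2.1 = 1 := by omega
    exact ⟨this, hone' this⟩
  have hpadP : ∀ t, t ∈ Mstar 1 → t ∉ T 1 → t ∈ P := by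
    intro t ht htT
    rw [hM1, hG1] at ht
    rcases Finset.mem_union.mp ht with h | h
    · rw [hF1] at h; exact absurd h htT
    · exact h
  apply Finset.card_le_card_of_injOn g
  · -- maps to occurrences
    intro p hp
    rcases Finset.mem_union.mp hp with hp | hp
    · rw [mem_pipeFin hTsub] at hp
      obtain ⟨hp1, hp2, hp3, hp4, hp5, hp6⟩ := hp
      have h0 : ¬ p.1 = 0 := by omega
      simp only [hg, if_neg h0]
      simp only [occSig, Finset.mem_coe, Finset.mem_sigma, Finset.mem_Icc]
      exact ⟨⟨by omega, hp3⟩, hp5⟩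
    · obtain ⟨h0, hIcc, -, hins⟩ := hSCdec p hp
      simp only [hg, if_pos h0]
      by_cases h2 : 2 ≤ p.2.1
      · rw [if_pos h2]
        obtain ⟨hin, hout⟩ := hins h2
        rw [Finset.mem_Icc] at hIcc
        have := hins_occ p.2.1 h2 hIcc.2 p.2.2 hin hout
        rw [occSig, Finset.mem_coe, Finset.mem_sigma]
        exact ⟨by rw [Finset.mem_Icc]; omega, this⟩
      · rw [if_neg h2]
        obtain ⟨hj1, htM1⟩ := hone p hp h2
        by_cases hT1 : p.2.2 ∈ T 1
        · rw [if_pos hT1]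
          rw [occSig, Finset.mem_coe, Finset.mem_sigma]
          exact ⟨h1n, hT1⟩
        · rw [if_neg hT1]
          have htP := hpadP _ htM1 hT1
          obtain ⟨hfo1, hfo2⟩ := hoccP _ (hPm htP)
          rw [occSig, Finset.mem_coe, Finset.mem_sigma]
          exact ⟨hfo1, hfo2⟩
  · -- injectivity
    intro p hp q hq hpq
    rw [Finset.mem_coe, Finset.mem_union] at hp hq
    -- helper for the "pipe vs start" clash
    have hclash : ∀ x y, x ∈ pipeFin n m T Mstar → y ∈ SC → g x ≠ g y := by
      intro x y hx hy hxy
      rw [mem_pipeFin hTsub] at hx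
      obtain ⟨hx1, hx2, hx3, hx4, hx5, hx6⟩ := hx
      obtain ⟨hy0, hyIcc, -, hyins⟩ := hSCdec y hy
      have hx0 : ¬ x.1 = 0 := by omega
      simp only [hg, if_neg hx0, if_pos hy0] at hxy
      by_cases h2 : 2 ≤ y.2.1
      · rw [if_pos h2] at hxy
        have he : x.2.1 = y.2.1 := congrArg Sigma.fst hxy
        have ht : x.2.2 = y.2.2 := congrArg Sigma.snd hxy
        obtain ⟨-, hout⟩ := hyins h2
        apply hout
        rw [← he, ← ht]
        exact hpipe_end _ _ _ ⟨hx1, hx2, hx3, hx4, hx5, hx6⟩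
      · rw [if_neg h2] at hxy
        obtain ⟨hj1, htM1⟩ := hone y hy h2
        by_cases hT1 : y.2.2 ∈ T 1
        · rw [if_pos hT1] at hxy
          have he : x.2.1 = 1 := congrArg Sigma.fst hxy
          omega
        · rw [if_neg hT1] at hxy
          have he : x.2.1 = firstOcc n T y.2.2 := congrArg Sigma.fst hxy
          have ht : x.2.2 = y.2.2 := congrArg Sigma.snd hxy
          have hfo : firstOcc n T y.2.2 ≤ x.1 := by
            apply firstOcc_min (s := x.1) (by rw [Finset.mem_Icc]; omega)
            rw [← ht]; exact hx4
          omega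
    rcases hp with hp | hp <;> rcases hq with hq | hq
    · -- both pipes
      have hp' := (mem_pipeFin hTsub).mp hp
      have hq' := (mem_pipeFin hTsub).mp hq
      have h0p : ¬ p.1 = 0 := by have := hp'.1; omega
      have h0q : ¬ q.1 = 0 := by have := hq'.1; omega
      simp only [hg, if_neg h0p, if_neg h0q] at hpq
      have he : p.2.1 = q.2.1 := congrArg Sigma.fst hpq
      have ht : p.2.2 = q.2.2 := congrArg Sigma.snd hpq
      have hs : p.1 = q.1 := by
        apply pipe_start_unique p.1 q.1 p.2.1 p.2.2 hp'
        rw [he, ht]; exact hq'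
      obtain ⟨ps, pe, pt⟩ := p
      obtain ⟨qs, qe, qt⟩ := q
      simp only at he ht hs
      simp [he, ht, hs]
    · exact absurd hpq (hclash p q hp hq)
    · exact absurd hpq.symm (hclash q p hq hp)
    · -- both starts
      obtain ⟨hp0, hpIcc, -, hpins⟩ := hSCdec p hp
      obtain ⟨hq0, hqIcc, -, hqins⟩ := hSCdec q hq
      simp only [hg, if_pos hp0, if_pos hq0] at hpq
      have hjj : p.2.1 = q.2.1 := by
        by_cases h2p : 2 ≤ p.2.1 <;> by_cases h2q : 2 ≤ q.2.1
        · rw [if_pos h2p, if_pos h2q] at hpq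
          exact congrArg Sigma.fst hpq
        · exfalso
          rw [if_pos h2p, if_neg h2q] at hpq
          obtain ⟨hq1, hqM1⟩ := hone q hq h2q
          by_cases hT1 : q.2.2 ∈ T 1
          · rw [if_pos hT1] at hpq
            have h1' : p.2.1 = 1 := congrArg Sigma.fst hpq
            omega
          · rw [if_neg hT1] at hpq
            have he : p.2.1 = firstOcc n T q.2.2 := congrArg Sigma.fst hpq
            have ht : p.2.2 = q.2.2 := congrArg Sigma.snd hpq
            obtain ⟨-, hout⟩ := hpins h2p
            apply hout
            rw [ht]
            exact hrun1 _ (hpadP _ hqM1 hT1) _ (by omega) (by omega)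
        · exfalso
          rw [if_neg h2p, if_pos h2q] at hpq
          obtain ⟨hp1, hpM1⟩ := hone p hp h2p
          by_cases hT1 : p.2.2 ∈ T 1
          · rw [if_pos hT1] at hpq
            have h1' : (1 : ℕ) = q.2.1 := congrArg Sigma.fst hpq
            omega
          · rw [if_neg hT1] at hpq
            have he : firstOcc n T p.2.2 = q.2.1 := congrArg Sigma.fst hpq
            have ht : p.2.2 = q.2.2 := congrArg Sigma.snd hpq
            obtain ⟨-, hout⟩ := hqins h2q
            apply hout
            rw [← ht]
            exact hrun1 _ (hpadP _ hpM1 hT1) _ (by omega) (by omega)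
        · obtain ⟨hp1, -⟩ := hone p hp h2p
          obtain ⟨hq1, -⟩ := hone q hq h2q
          omega
      have htt : p.2.2 = q.2.2 := by
        by_cases h2p : 2 ≤ p.2.1 <;> by_cases h2q : 2 ≤ q.2.1 <;>
          [skip; omega; omega; skip]
        · rw [if_pos h2p, if_pos h2q] at hpq
          exact congrArg Sigma.snd hpq
        · rw [if_neg h2p, if_neg h2q] at hpq
          by_cases hTp : p.2.2 ∈ T 1 <;> by_cases hTq : q.2.2 ∈ T 1 <;>
            simp only [if_pos, if_neg, hTp, hTq, if_true, if_false] at hpq <;>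
            exact congrArg Sigma.snd hpq
      obtain ⟨pa, pj, pt⟩ := p
      obtain ⟨qa, qj, qt⟩ := q
      simp only at hjj htt hp0 hq0
      simp [hjj, htt, hp0, hq0]



lemma MS_nonempty {n C m : ℕ} {T : ℕ → Finset ℕ} (hCm : C < m)
    (hT : ∀ i ∈ Finset.Icc 1 n, (T i).card ≤ C)
    (hTsub : ∀ i ∈ Finset.Icc 1 n, T i ⊆ Finset.Icc 1 m) :
    ∃ M, M ∈ MS n C T := by
  classical
  have h : ∀ i : ℕ, ∃ u : Finset ℕ, i ∈ Finset.Icc 1 n → T i ⊆ u ∧ u.card = C := by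
    intro i
    by_cases hi : i ∈ Finset.Icc 1 n
    · obtain ⟨u, hu1, _, hu3⟩ := Finset.exists_subsuperset_card_eq (hTsub i hi)
        (hT i hi) (by rw [Nat.card_Icc]; omega)
      exact ⟨u, fun _ => ⟨hu1, hu3⟩⟩
    · exact ⟨∅, fun h => absurd h hi⟩
  choose f hf using h
  exact ⟨f, fun i hi => hf i hi⟩

end Thm1

/-- Theorem 1: for a fixed job sequence,
`min_{M ∈ M(S)} switches(M) = Σᵢ |Tᵢ| − C − max_{M ∈ M(S)} |T(M)|`. -/
theorem theorem1 (n C m : ℕ) (T : ℕ → Finset ℕ)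
    (hn : 1 ≤ n) (hCm : C < m)
    (hT : ∀ i ∈ Finset.Icc 1 n, (T i).card ≤ C)
    (hTsub : ∀ i ∈ Finset.Icc 1 n, T i ⊆ Finset.Icc 1 m)
    (hcover : (Finset.Icc 1 n).biUnion T = Finset.Icc 1 m) :
    ((sInf {k : ℕ | ∃ M ∈ MS n C T, switches n C M = k} : ℕ) : ℤ) =
      (∑ i ∈ Finset.Icc 1 n, ((T i).card : ℤ)) - C -
        ((sSup {k : ℕ | ∃ M ∈ MS n C T, (pipeSet n T M).ncard = k} : ℕ) : ℤ) := by
  classical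
  obtain ⟨Mex, hMex⟩ := Thm1.MS_nonempty hCm hT hTsub
  set Ssw : Set ℕ := {k : ℕ | ∃ M ∈ MS n C T, switches n C M = k} with hSsw
  set Spi : Set ℕ := {k : ℕ | ∃ M ∈ MS n C T, (pipeSet n T M).ncard = k} with hSpi
  have hpi_card : ∀ M : ℕ → Finset ℕ,
      (pipeSet n T M).ncard = (Thm1.pipeFin n m T M).card := by
    intro M
    rw [Thm1.coe_pipeFin hTsub, Set.ncard_coe_finset]
  have hsw_ne : Ssw.Nonempty := ⟨_, Mex, hMex, rfl⟩
  have hpi_ne : Spi.Nonempty := ⟨_, Mex, hMex, rfl⟩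
  have hpi_bdd : BddAbove Spi := by
    refine ⟨((Finset.Icc 1 n) ×ˢ (Finset.Icc 1 n) ×ˢ (Finset.Icc 1 m)).card, ?_⟩
    rintro k ⟨M, hM, rfl⟩
    rw [hpi_card M]
    exact Finset.card_filter_le _ _
  obtain ⟨Mdag, hMdag, hMdagP⟩ := Nat.sSup_mem hpi_ne hpi_bdd
  obtain ⟨Mmin, hMmin, hMminS⟩ := Nat.sInf_mem hsw_ne
  -- lower bound
  have hlow := Thm1.lower_bound (n := n) (C := C) (m := m) Mmin hMmin hTsub
  rw [Thm1.occSig_card, Thm1.startSig_card Mmin hn hMmin] at hlow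
  have hminP_le : (Thm1.pipeFin n m T Mmin).card ≤ sSup Spi := by
    apply le_csSup hpi_bdd
    exact ⟨Mmin, hMmin, hpi_card Mmin⟩
  -- upper bound
  obtain ⟨Mgood, hMgood, hgood1, hgood2⟩ :=
    Thm1.exists_good hn hCm hT hTsub hcover Mdag hMdag
  rw [Thm1.occSig_card, Thm1.startSig_card Mgood hn hMgood] at hgood2
  have hgood_sw : sInf Ssw ≤ switches n C Mgood :=
    Nat.sInf_le ⟨Mgood, hMgood, rfl⟩
  have hdagP : sSup Spi = (Thm1.pipeFin n m T Mdag).card := by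
    rw [← hMdagP, hpi_card]
  -- combine to an equality over ℕ
  have hkey : ∑ i ∈ Finset.Icc 1 n, (T i).card = sSup Spi + C + sInf Ssw := by
    have h1 : ∑ i ∈ Finset.Icc 1 n, (T i).card ≤ sSup Spi + C + sInf Ssw := by
      rw [hMminS] at hlow
      omega
    have h2 : sSup Spi + C + sInf Ssw ≤ ∑ i ∈ Finset.Icc 1 n, (T i).card := by
      have := hdagP ▸ hgood1
      omega
    omega
  have hcast : ((∑ i ∈ Finset.Icc 1 n, (T i).card : ℕ) : ℤ) =
      ∑ i ∈ Finset.Icc 1 n, ((T i).card : ℤ) := by push_cast; rfl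
  have := congrArg (fun x : ℕ => (x : ℤ)) hkey
  push_cast at this
  rw [← hSsw, ← hSpi] at *
  linarith [this, hcast]
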